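/- Let d, κ ∈ (0,∞) and β₋ ∈ (0,∞). Then for every continuously differentiable function ζ : [−d,0] → ℝ, (4d²/(κπ²) + d/β₋)^{−1} · ∫_{−d}^{0} |ζ(r)|² dr ≤ κ∫_{−d}^{0} |ζ′(r)|² dr + β₋|ζ(−d)|². -/

import Mathlib

open MeasureTheory Real Set


noncomputable def bsF (x : ℝ) : ℝ := π^2*x*Real.cos x - (π^2-4*x^2)*Real.sin x
noncomputable def bsG (x : ℝ) : ℝ := 4*x*Real.cos x - (π^2-8)*Real.sin x
noncomputable def bsG1 (x : ℝ) : ℝ := (12-π^2)*Real.cos x - 4*x*Real.sin x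

lemma hdF (x : ℝ) : HasDerivAt bsF (x * bsG x) x := by
  have ha := ((hasDerivAt_id x).const_mul (π^2)).mul (Real.hasDerivAt_cos x)
  have hb := (((hasDerivAt_pow 2 x).const_mul 4).const_sub (π^2)).mul (Real.hasDerivAt_sin x)
  have h := ha.sub hb
  exact h.congr_deriv (by simp [bsG]; ring)

lemma hdG (x : ℝ) : HasDerivAt bsG (bsG1 x) x := by
  have ha := ((hasDerivAt_id x).const_mul 4).mul (Real.hasDerivAt_cos x)
  have hb := (Real.hasDerivAt_sin x).const_mul (π^2-8)
  have h := ha.sub hb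
  exact h.congr_deriv (by simp [bsG1]; ring)

lemma hdG1 (x : ℝ) : HasDerivAt bsG1 (-(16-π^2)*Real.sin x - 4*x*Real.cos x) x := by
  have ha := (Real.hasDerivAt_cos x).const_mul (12-π^2)
  have hb := ((hasDerivAt_id x).const_mul 4).mul (Real.hasDerivAt_sin x)
  have h := ha.sub hb
  exact h.congr_deriv (by simp; ring)

lemma contF : Continuous bsF := by unfold bsF; fun_prop
lemma contG : Continuous bsG := by unfold bsG; fun_prop
lemma contG1 : Continuous bsG1 := by unfold bsG1; fun_prop

lemma becker_stark {x : ℝ} (h0 : 0 ≤ x) (h2 : x ≤ π/2) :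
    (π^2 - 4*x^2) * Real.sin x ≤ π^2 * x * Real.cos x := by
  have hπ3 : (3:ℝ) < π := Real.pi_gt_three
  have hπ4 : π < 3.15 := Real.pi_lt_d2
  have hπ0 : (0:ℝ) < π := by linarith
  -- g1 strictly decreasing on [0, π/2]
  have hanti : StrictAntiOn bsG1 (Icc 0 (π/2)) := by
    apply strictAntiOn_of_deriv_neg (convex_Icc _ _) contG1.continuousOn
    intro y hy
    rw [interior_Icc] at hy
    rw [(hdG1 y).deriv]
    have hs : 0 < Real.sin y := Real.sin_pos_of_pos_of_lt_pi hy.1 (by linarith [hy.2])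
    have hc : 0 < Real.cos y := Real.cos_pos_of_mem_Ioo ⟨by linarith [hy.1], hy.2⟩
    have h16 : (0:ℝ) < 16 - π^2 := by nlinarith
    nlinarith [mul_pos h16 hs, mul_pos hy.1 hc]
  -- root c of g1
  have hG1_0 : bsG1 0 = 12 - π^2 := by simp [bsG1]
  have hG1_pi2 : bsG1 (π/2) = -(2*π) := by simp [bsG1]; ring
  obtain ⟨c, hcmem, hgc⟩ : ∃ c ∈ Icc 0 (π/2), bsG1 c = 0 := by
    have := intermediate_value_Icc' (by positivity : (0:ℝ) ≤ π/2) contG1.continuousOn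
    have h0mem : (0:ℝ) ∈ Icc (bsG1 (π/2)) (bsG1 0) := by
      rw [hG1_0, hG1_pi2]; constructor <;> nlinarith
    obtain ⟨c, hc, hc2⟩ := this h0mem
    exact ⟨c, hc, hc2⟩
  have hc0 : 0 < c := by
    rcases eq_or_lt_of_le hcmem.1 with h | h
    · exfalso; rw [← h] at hgc; rw [hG1_0] at hgc; nlinarith
    · exact h
  have hcpi : c < π/2 := by
    rcases eq_or_lt_of_le hcmem.2 with h | h
    · exfalso; rw [h] at hgc; rw [hG1_pi2] at hgc; nlinarith
    · exact h
  -- g mono on [0,c], anti on [c,π/2]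
  have hmonoG : StrictMonoOn bsG (Icc 0 c) := by
    apply strictMonoOn_of_deriv_pos (convex_Icc _ _) contG.continuousOn
    intro y hy
    rw [interior_Icc] at hy
    rw [(hdG y).deriv]
    have : bsG1 c < bsG1 y := hanti ⟨le_of_lt hy.1, by linarith [hy.2]⟩ hcmem (hy.2)
    linarith [hgc ▸ this]
  have hantiG : StrictAntiOn bsG (Icc c (π/2)) := by
    apply strictAntiOn_of_deriv_neg (convex_Icc _ _) contG.continuousOn
    intro y hy
    rw [interior_Icc] at hy
    rw [(hdG y).deriv]
    have : bsG1 y < bsG1 c := hanti hcmem ⟨by linarith [hy.1], le_of_lt hy.2⟩ hy.1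
    linarith [hgc ▸ this]
  have hG0 : bsG 0 = 0 := by simp [bsG]
  have hGc : 0 < bsG c := by
    have := hmonoG ⟨le_refl 0, le_of_lt hc0⟩ ⟨le_of_lt hc0, le_refl c⟩ hc0
    rw [hG0] at this; exact this
  have hGpi2 : bsG (π/2) = 8 - π^2 := by simp [bsG]
  -- root b of g
  obtain ⟨b, hbmem, hgb⟩ : ∃ b ∈ Icc c (π/2), bsG b = 0 := by
    have := intermediate_value_Icc' (le_of_lt hcpi) (contG.continuousOn)
    have h0mem : (0:ℝ) ∈ Icc (bsG (π/2)) (bsG c) := by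
      rw [hGpi2]; constructor <;> nlinarith
    obtain ⟨b, hb, hb2⟩ := this h0mem
    exact ⟨b, hb, hb2⟩
  have hbc : c < b := by
    rcases eq_or_lt_of_le hbmem.1 with h | h
    · exfalso; rw [← h] at hgb; nlinarith
    · exact h
  have hbpi : b < π/2 := by
    rcases eq_or_lt_of_le hbmem.2 with h | h
    · exfalso; rw [h, hGpi2] at hgb; nlinarith
    · exact h
  have hb0 : 0 < b := lt_trans hc0 hbc
  -- sign of g
  have hGpos : ∀ y ∈ Ioo 0 b, 0 < bsG y := by
    intro y hy
    rcases le_or_gt y c with h | h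
    · have := hmonoG ⟨le_refl 0, le_of_lt hc0⟩ ⟨le_of_lt hy.1, h⟩ hy.1
      rw [hG0] at this; exact this
    · have := hantiG ⟨le_of_lt h, by linarith [hy.2]⟩ hbmem hy.2
      rw [hgb] at this; exact this
  have hGneg : ∀ y ∈ Ioo b (π/2), bsG y < 0 := by
    intro y hy
    have := hantiG hbmem ⟨by linarith [hy.1, hbmem.1], le_of_lt hy.2⟩ hy.1
    rw [hgb] at this; exact this
  -- f mono on [0,b], anti on [b,π/2]
  have hmonoF : StrictMonoOn bsF (Icc 0 b) := by
    apply strictMonoOn_of_deriv_pos (convex_Icc _ _) contF.continuousOn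
    intro y hy
    rw [interior_Icc] at hy
    rw [(hdF y).deriv]
    exact mul_pos hy.1 (hGpos y hy)
  have hantiF : StrictAntiOn bsF (Icc b (π/2)) := by
    apply strictAntiOn_of_deriv_neg (convex_Icc _ _) contF.continuousOn
    intro y hy
    rw [interior_Icc] at hy
    rw [(hdF y).deriv]
    exact mul_neg_of_pos_of_neg (lt_trans hb0 hy.1) (hGneg y hy)
  have hF0 : bsF 0 = 0 := by simp [bsF]
  have hFpi2 : bsF (π/2) = 0 := by simp [bsF]; ring
  have key : 0 ≤ bsF x := by
    rcases le_or_gt x b with h | h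
    · rcases eq_or_lt_of_le h0 with h0' | h0'
      · rw [← h0', hF0]
      · have := hmonoF ⟨le_refl 0, le_of_lt hb0⟩ ⟨h0, h⟩ h0'
        rw [hF0] at this; exact le_of_lt this
    · rcases eq_or_lt_of_le h2 with h2' | h2'
      · rw [h2', hFpi2]
      · have := hantiF ⟨le_of_lt h, h2⟩ ⟨by linarith, le_refl _⟩ h2'
        rw [hFpi2] at this; exact le_of_lt this
  unfold bsF at key; linarith

/-- **One-dimensional coercivity of the dissipation functional, case
`β₊ = 0`, `β₋ ∈ (0,∞)`.**  For every continuously differentiable `ζ : [-d,0] → ℝ`,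
`(4d²/(κπ²) + d/β₋)⁻¹ ⬝ ∫_{-d}^0 |ζ|² ≤ κ ∫_{-d}^0 |ζ'|² + β₋|ζ(-d)|²`. -/
theorem one_dim_coercivity_neumann_robin
    (d κ βm : ℝ) (hd : 0 < d) (hκ : 0 < κ) (hβm : 0 < βm)
    (ζ : ℝ → ℝ) (hζ : ContDiff ℝ 1 ζ) :
    (4 * d ^ 2 / (κ * π ^ 2) + d / βm)⁻¹ * (∫ r in Ioo (-d) 0, (ζ r) ^ 2) ≤
      κ * (∫ r in Ioo (-d) 0, (deriv ζ r) ^ 2) + βm * (ζ (-d)) ^ 2 := by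
  have hπ : (0:ℝ) < π := Real.pi_pos
  set C : ℝ := 4*d^2/π^2 + κ*d/βm with hCdef
  have hC : 0 < C := by positivity
  set ω : ℝ := (Real.sqrt C)⁻¹ with hωdef
  have hsC : 0 < Real.sqrt C := Real.sqrt_pos.2 hC
  have hω : 0 < ω := by positivity
  have hω2 : ω^2 = C⁻¹ := by
    rw [hωdef, inv_pow, Real.sq_sqrt (le_of_lt hC)]
  have hconst : (4 * d ^ 2 / (κ * π ^ 2) + d / βm)⁻¹ = κ * ω^2 := by
    rw [hω2]
    rw [show (4 * d ^ 2 / (κ * π ^ 2) + d / βm) = C / κ by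
      rw [hCdef]; field_simp]
    rw [inv_div]
    rw [div_eq_mul_inv]
  set x : ℝ := ω * d with hxdef
  have hx0 : 0 < x := mul_pos hω hd
  have hx2eq : x^2 = d^2 / C := by
    rw [hxdef, mul_pow, hω2, inv_mul_eq_div]
  clear_value x ω C
  have hxlt : x < π/2 := by
    have hx2 : x^2 < (π/2)^2 := by
      rw [hx2eq, div_pow, div_lt_div_iff₀ hC (by positivity : (0:ℝ) < 2^2)]
      have hClt : 4*d^2/π^2 < C := by
        have : 0 < κ*d/βm := by positivity
        rw [hCdef]; linarith
      have h4d : (4*d^2/π^2)*π^2 = 4*d^2 := by field_simp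
      nlinarith [mul_lt_mul_of_pos_right hClt (by positivity : (0:ℝ) < π^2)]
    exact lt_of_pow_lt_pow_left₀ 2 (by positivity) hx2
  -- cos positivity on [-d,0]
  have hcos : ∀ r ∈ Icc (-d) (0:ℝ), 0 < Real.cos (ω*r) := by
    intro r hr
    apply Real.cos_pos_of_mem_Ioo
    constructor
    · have h1 : ω * (-d) ≤ ω * r := mul_le_mul_of_nonneg_left hr.1 (le_of_lt hω)
      have : -(ω*d) ≤ ω*r := by linarith [h1]
      linarith [hxlt]
    · have h1 : ω * r ≤ ω * 0 := mul_le_mul_of_nonneg_left hr.2 (le_of_lt hω)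
      simp at h1; linarith
  have hcx : 0 < Real.cos x := Real.cos_pos_of_mem_Ioo ⟨by linarith, hxlt⟩
  -- key: κ ω tan x ≤ βm  (Becker–Stark)
  have hπ4x : 0 < π^2 - 4*x^2 := by nlinarith [hxlt, hx0]
  have hid : βm * (π^2 - 4*x^2) = κ*π^2*ω^2*d := by
    rw [hx2eq, hω2, hCdef]; field_simp; ring
  have hkey : κ * ω * Real.tan x ≤ βm := by
    have hbs := becker_stark (le_of_lt hx0) (le_of_lt hxlt)
    have h2 : κ*ω*((π^2-4*x^2)*Real.sin x) ≤ κ*ω*(π^2*x*Real.cos x) :=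
      mul_le_mul_of_nonneg_left hbs (by positivity)
    have h3 : κ*ω*(π^2*x*Real.cos x) = (βm*Real.cos x)*(π^2-4*x^2) := by
      have h3' : κ*ω*(π^2*x) = βm*(π^2-4*x^2) := by rw [hid, hxdef]; ring
      linear_combination Real.cos x * h3'
    have h4 : (κ*ω*Real.sin x)*(π^2-4*x^2) ≤ (βm*Real.cos x)*(π^2-4*x^2) :=
      calc (κ*ω*Real.sin x)*(π^2-4*x^2) = κ*ω*((π^2-4*x^2)*Real.sin x) := by ring
        _ ≤ κ*ω*(π^2*x*Real.cos x) := h2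
        _ = (βm*Real.cos x)*(π^2-4*x^2) := h3
    have h5 : κ*ω*Real.sin x ≤ βm*Real.cos x := le_of_mul_le_mul_right h4 hπ4x
    rw [Real.tan_eq_sin_div_cos]
    rw [show κ*ω*(Real.sin x/Real.cos x) = (κ*ω*Real.sin x)/Real.cos x by ring]
    rw [div_le_iff₀ hcx]
    linarith [h5, mul_le_mul_of_nonneg_right (le_refl βm) (le_of_lt hcx)]
  -- the ground-state substitution
  have hζc : Continuous ζ := hζ.continuous
  have hζ'c : Continuous (deriv ζ) := hζ.continuous_deriv le_rfl
  have hζd : ∀ r, HasDerivAt ζ (deriv ζ r) r := fun r => ((hζ.differentiable one_ne_zero) r).hasDerivAt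
  set T : ℝ → ℝ := fun r => Real.tan (ω*r) with hT
  set F : ℝ → ℝ := fun r => -(κ*ω*T r*(ζ r)^2) with hF
  set G : ℝ → ℝ := fun r => -(κ*ω^2*(1+T r^2)*(ζ r)^2) - κ*ω*T r*(2*ζ r*deriv ζ r) with hG
  have hTc : ContinuousOn T (Icc (-d) 0) := by
    intro r hr
    exact ((Real.continuousAt_tan.2 (hcos r hr).ne').comp
      ((continuous_const.mul continuous_id).continuousAt)).continuousWithinAt
  have hFderiv : ∀ r ∈ Icc (-d) (0:ℝ), HasDerivAt F (G r) r := by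
    intro r hr
    have hc := (hcos r hr).ne'
    have honectan : 1 + T r^2 = 1/Real.cos (ω*r)^2 := by
      have hc2 : Real.cos (ω*r)^2 ≠ 0 := pow_ne_zero 2 hc
      rw [hT]; simp only
      rw [Real.tan_eq_sin_div_cos, div_pow]
      field_simp; exact Real.cos_sq_add_sin_sq _
    have h2 : HasDerivAt (fun r : ℝ => ω*r) ω r := by
      simpa using (hasDerivAt_id r).const_mul ω
    have htan : HasDerivAt T (ω*(1 + T r^2)) r := by
      have h1 := (Real.hasDerivAt_tan hc).comp r h2
      exact h1.congr_deriv (by rw [honectan]; ring)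
    have hzsq : HasDerivAt (fun r => (ζ r)^2) (2*ζ r*deriv ζ r) r := by
      have := (hζd r).pow 2
      exact this.congr_deriv (by simp only [Nat.cast_ofNat, Nat.reduceSub, pow_one])
    have hmain := ((htan.const_mul (κ*ω)).mul hzsq).neg
    exact hmain.congr_deriv (by simp only [hG]; ring)
  have hGcont : ContinuousOn G (Icc (-d) 0) := by
    apply ContinuousOn.sub
    · exact ((continuousOn_const.mul ((continuousOn_const.add (hTc.pow 2)))).mul
        ((hζc.continuousOn).pow 2)).neg
    · exact ((continuousOn_const.mul hTc).mul
        ((continuousOn_const.mul (hζc.continuousOn)).mul (hζ'c.continuousOn)))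
  have hab : (-d) ≤ (0:ℝ) := by linarith
  have hGint : IntervalIntegrable G volume (-d) 0 := by
    have : ContinuousOn G (uIcc (-d) 0) := by rw [Set.uIcc_of_le hab]; exact hGcont
    exact this.intervalIntegrable
  have hFTC : ∫ r in (-d)..0, G r = F 0 - F (-d) := by
    apply intervalIntegral.integral_eq_sub_of_hasDerivAt
    · intro r hr; rw [Set.uIcc_of_le hab] at hr; exact hFderiv r hr
    · exact hGint
  have hF0 : F 0 = 0 := by simp [hF, hT]
  have hFd : F (-d) = κ*ω*Real.tan x*(ζ (-d))^2 := by
    simp only [hF, hT, hxdef]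
    rw [mul_neg, Real.tan_neg]; ring
  have hptwise : ∀ r, 0 ≤ κ*(deriv ζ r)^2 - κ*ω^2*(ζ r)^2 - G r := by
    intro r
    have heq : κ*(deriv ζ r)^2 - κ*ω^2*(ζ r)^2 - G r
        = κ*(deriv ζ r + ω*T r*ζ r)^2 := by simp only [hG]; ring
    rw [heq]; positivity
  have hint1 : IntervalIntegrable (fun r => (deriv ζ r)^2) volume (-d) 0 :=
    (hζ'c.pow 2).intervalIntegrable _ _
  have hint0 : IntervalIntegrable (fun r => (ζ r)^2) volume (-d) 0 :=
    (hζc.pow 2).intervalIntegrable _ _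
  have hsplit : ∫ r in (-d)..0, (κ*(deriv ζ r)^2 - κ*ω^2*(ζ r)^2 - G r)
      = κ*(∫ r in (-d)..0, (deriv ζ r)^2) - κ*ω^2*(∫ r in (-d)..0, (ζ r)^2)
        - ∫ r in (-d)..0, G r := by
    rw [intervalIntegral.integral_sub ((hint1.const_mul κ).sub (hint0.const_mul (κ*ω^2))) hGint]
    rw [intervalIntegral.integral_sub (hint1.const_mul κ) (hint0.const_mul (κ*ω^2))]
    rw [intervalIntegral.integral_const_mul, intervalIntegral.integral_const_mul]
  have hnonneg : 0 ≤ ∫ r in (-d)..0, (κ*(deriv ζ r)^2 - κ*ω^2*(ζ r)^2 - G r) :=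
    intervalIntegral.integral_nonneg hab (fun u _ => hptwise u)
  have hG_val : ∫ r in (-d)..0, G r = -(κ*ω*Real.tan x*(ζ (-d))^2) := by
    rw [hFTC, hF0, hFd]; ring
  have hbound : κ*ω*Real.tan x*(ζ (-d))^2 ≤ βm*(ζ (-d))^2 :=
    mul_le_mul_of_nonneg_right hkey (sq_nonneg _)
  have hIoo : ∀ f : ℝ → ℝ, (∫ r in Ioo (-d) 0, f r) = ∫ r in (-d)..0, f r := by
    intro f
    rw [intervalIntegral.integral_of_le hab, MeasureTheory.integral_Ioc_eq_integral_Ioo]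
  rw [hconst, hIoo, hIoo]
  have := hsplit ▸ hnonneg
  rw [hG_val] at this
  linarith [this, hbound]
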